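/- arXiv:2507.09511 — 3 statements merged into one kernel-verified Lean document; each statement's English description precedes it below -/
import Mathlib

section
/- The largest adjacency eigenvalue of the spider graph T(ℓ,ℓ,ℓ) tends to 3/√2 as ℓ → ∞. -/
open scoped Classical

/-- The real adjacency matrix of a finite simple graph. -/
noncomputable def adjMat {V : Type*} [Fintype V] [DecidableEq V] (G : SimpleGraph V) :
    Matrix V V ℝ :=
  Matrix.of fun u v => if G.Adj u v then (1 : ℝ) else 0

/-- The eigenvalues (roots of the characteristic polynomial, with multiplicity) of a real
matrix, listed in nondecreasing order. -/
noncomputable def eigList {V : Type*} [Fintype V] [DecidableEq V] (A : Matrix V V ℝ) : List ℝ :=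
  A.charpoly.roots.sort (· ≤ ·)

/-- The `k`-th largest eigenvalue (with multiplicity) of `A`, 1-indexed:
`eig A 1 ≥ eig A 2 ≥ …`. -/
noncomputable def eig {V : Type*} [Fintype V] [DecidableEq V] (A : Matrix V V ℝ) (k : ℕ) : ℝ :=
  (eigList A).getD ((eigList A).length - k) 0

/-- The `k`-th largest adjacency eigenvalue of a finite simple graph (`λₖ(G)`). -/
noncomputable def graphEig {V : Type*} [Fintype V] [DecidableEq V] (G : SimpleGraph V)
    (k : ℕ) : ℝ :=
  eig (adjMat G) k

/-- The multiplicity of `μ` as an eigenvalue of `A` (dimension of the eigenspace). -/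
noncomputable def eigMult {V : Type*} [Fintype V] [DecidableEq V] (A : Matrix V V ℝ)
    (μ : ℝ) : ℕ :=
  Module.finrank ℝ (LinearMap.ker (A.mulVecLin - μ • LinearMap.id))

/-- The number of edges of a finite simple graph. -/
noncomputable def edgeCount {V : Type*} [Fintype V] (G : SimpleGraph V) : ℕ :=
  G.edgeSet.toFinite.toFinset.card

/-- The cyclomatic number `|E| - |V| + 1` of a (connected) finite graph. -/
noncomputable def cyclomatic {V : Type*} [Fintype V] (G : SimpleGraph V) : ℕ :=
  edgeCount G + 1 - Fintype.card V

/-- The maximum degree of a finite simple graph. -/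
noncomputable def maxDeg {V : Type*} [Fintype V] (G : SimpleGraph V) : ℕ :=
  Finset.univ.sup fun v => (G.neighborSet v).toFinite.toFinset.card

/-- The spider `T(ℓ,ℓ,ℓ)`: three paths of length `ℓ` (in edges) sharing exactly their
initial vertex `none`. -/
def spider (ℓ : ℕ) : SimpleGraph (Option (Fin 3 × Fin ℓ)) :=
  SimpleGraph.fromRel fun u v =>
    match u, v with
    | none, some (_, j) => (j : ℕ) = 0
    | some (i, j), some (i', j') => i = i' ∧ (j' : ℕ) = (j : ℕ) + 1
    | _, _ => False


section Aux
set_option linter.unusedSectionVars false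
open Matrix Polynomial

variable {V : Type*} [Fintype V] [DecidableEq V]


lemma eval_charpoly'' (A : Matrix V V ℝ) (μ : ℝ) :
    A.charpoly.eval μ = (μ • (1 : Matrix V V ℝ) - A).det := by
  rw [Matrix.charpoly, ← Polynomial.coe_evalRingHom, RingHom.map_det]
  congr 1
  ext i j
  by_cases h : i = j <;>
    simp [h, Matrix.charmatrix_apply, Matrix.one_apply, Matrix.smul_apply, Matrix.sub_apply,
      Matrix.diagonal_apply]

lemma isRoot_iff_eigen (A : Matrix V V ℝ) (μ : ℝ) :
    A.charpoly.IsRoot μ ↔ ∃ v, v ≠ 0 ∧ A.mulVec v = μ • v := by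
  rw [Polynomial.IsRoot, eval_charpoly'', ← Matrix.exists_mulVec_eq_zero_iff]
  constructor
  · rintro ⟨v, hv, h⟩
    refine ⟨v, hv, ?_⟩
    have := h
    rw [Matrix.sub_mulVec, Matrix.smul_mulVec, Matrix.one_mulVec, sub_eq_zero] at this
    exact this.symm
  · rintro ⟨v, hv, h⟩
    refine ⟨v, hv, ?_⟩
    rw [Matrix.sub_mulVec, Matrix.smul_mulVec, Matrix.one_mulVec, h, sub_self]



lemma quad_le_mu (A : Matrix V V ℝ) (hsym : A.IsSymm) (hnn : ∀ i j, 0 ≤ A i j)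
    (x : V → ℝ) (hx : ∀ i, 0 < x i) (μ : ℝ) (hAx : ∀ i, A.mulVec x i ≤ μ * x i)
    (y : V → ℝ) : ∑ i, y i * A.mulVec y i ≤ μ * ∑ i, y i ^ 2 := by
  have step1 : ∑ i, y i * A.mulVec y i
      = ∑ i, ∑ j, A i j * (y i * y j) := by
    simp only [Matrix.mulVec, dotProduct, Finset.mul_sum]
    exact Finset.sum_congr rfl fun i _ => Finset.sum_congr rfl fun j _ => by ring
  rw [step1]
  have key : ∀ i j, A i j * (y i * y j)
      ≤ (A i j * (x j / x i * y i ^ 2) + A i j * (x i / x j * y j ^ 2)) / 2 := by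
    intro i j
    have hxi := hx i; have hxj := hx j
    have h2 : 2 * (y i * y j) ≤ x j / x i * y i ^ 2 + x i / x j * y j ^ 2 := by
      rw [← sub_nonneg]
      have e : x j / x i * y i ^ 2 + x i / x j * y j ^ 2 - 2 * (y i * y j)
          = (x j / x i * y i - y j)^2 / (x j / x i) := by
        field_simp
        ring
      rw [e]; positivity
    nlinarith [hnn i j, mul_le_mul_of_nonneg_left h2 (hnn i j)]
  calc ∑ i, ∑ j, A i j * (y i * y j)
      ≤ ∑ i, ∑ j, (A i j * (x j / x i * y i ^ 2) + A i j * (x i / x j * y j ^ 2)) / 2 := by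
        apply Finset.sum_le_sum; intro i _; apply Finset.sum_le_sum; intro j _; exact key i j
    _ = (∑ i, ∑ j, A i j * (x j / x i * y i ^ 2)
        + ∑ i, ∑ j, A i j * (x i / x j * y j ^ 2)) / 2 := by
        simp [add_div, Finset.sum_add_distrib, Finset.sum_div]
    _ ≤ μ * ∑ i, y i ^ 2 := by
        have e2 : ∑ i, ∑ j, A i j * (x i / x j * y j ^ 2)
            = ∑ i, ∑ j, A i j * (x j / x i * y i ^ 2) := by
          rw [Finset.sum_comm]
          refine Finset.sum_congr rfl fun i _ => Finset.sum_congr rfl fun j _ => ?_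
          have hji : A j i = A i j := by
            have := congrFun (congrFun hsym i) j
            simpa using this
          rw [hji]
        rw [e2, add_self_div_two]
        have e3 : ∀ i, ∑ j, A i j * (x j / x i * y i ^ 2)
            = (A.mulVec x i) * (y i ^ 2 / x i) := by
          intro i
          simp only [Matrix.mulVec, dotProduct, Finset.sum_mul]
          refine Finset.sum_congr rfl fun j _ => ?_
          have := (hx i).ne'
          field_simp
        calc ∑ i, ∑ j, A i j * (x j / x i * y i ^ 2)
            = ∑ i, (A.mulVec x i) * (y i ^ 2 / x i) := Finset.sum_congr rfl fun i _ => e3 i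
          _ ≤ ∑ i, (μ * x i) * (y i ^ 2 / x i) := by
              apply Finset.sum_le_sum; intro i _
              have hxi := hx i
              exact mul_le_mul_of_nonneg_right (hAx i) (by positivity)
          _ = μ * ∑ i, y i ^ 2 := by
              rw [Finset.mul_sum]
              refine Finset.sum_congr rfl fun i _ => ?_
              have := (hx i).ne'
              field_simp

lemma eig_one_spec (A : Matrix V V ℝ) (h : A.charpoly.roots ≠ 0) :
    eig A 1 ∈ A.charpoly.roots ∧ ∀ r ∈ A.charpoly.roots, r ≤ eig A 1 := by
  have hlen : (eigList A).length ≠ 0 := by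
    simp only [eigList, Multiset.length_sort]
    simpa using h
  have hlt : (eigList A).length - 1 < (eigList A).length := by omega
  have hget : eig A 1 = (eigList A).get ⟨(eigList A).length - 1, hlt⟩ := by
    simp [eig, List.getD_eq_getElem?_getD, List.getElem?_eq_getElem hlt]
  have hsorted : (eigList A).Pairwise (· ≤ ·) := Multiset.pairwise_sort _ _
  constructor
  · rw [hget]
    have hmem : (eigList A).get ⟨(eigList A).length - 1, hlt⟩ ∈ eigList A :=
      List.get_mem _ _
    exact (Multiset.mem_sort _).mp hmem
  · intro r hr
    have hr' : r ∈ eigList A := (Multiset.mem_sort _).mpr hr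
    obtain ⟨i, hi⟩ := List.get_of_mem hr'
    rw [hget, ← hi]
    rcases lt_or_eq_of_le (Nat.le_sub_one_of_lt i.isLt) with hlt2 | heq
    · exact hsorted.rel_get_of_lt (by simpa [Fin.lt_def] using hlt2)
    · have : i = ⟨(eigList A).length - 1, hlt⟩ := Fin.ext heq
      rw [this]

lemma sum_sq_pos {y : V → ℝ} (hy : y ≠ 0) : 0 < ∑ i, y i ^ 2 := by
  obtain ⟨i, hi⟩ := Function.ne_iff.mp hy
  exact Finset.sum_pos' (fun j _ => sq_nonneg _)
    ⟨i, Finset.mem_univ i, by rw [pow_two]; exact mul_self_pos.mpr hi⟩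

lemma key_bounds' [Nonempty V] (A : Matrix V V ℝ) (hsym : A.IsSymm)
    (hnn : ∀ i j, 0 ≤ A i j) (x : V → ℝ) (hx : ∀ i, 0 < x i) (μ : ℝ)
    (hAx : ∀ i, A.mulVec x i ≤ μ * x i) :
    (∀ y : V → ℝ, y ≠ 0 →
      (∑ i, y i * A.mulVec y i) / (∑ i, y i ^ 2) ≤ eig A 1) ∧ eig A 1 ≤ μ := by
  -- set up the symmetric operator
  have hAH : A.IsHermitian := by
    rw [Matrix.IsHermitian]
    rw [Matrix.conjTranspose]
    convert (show Aᵀ = A from hsym) using 1; ext i j; simp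
  set T := Matrix.toEuclideanLin A with hT
  have hTsymm : T.IsSymmetric := Matrix.isHermitian_iff_isSymmetric.mp hAH
  have hTapp : ∀ z : EuclideanSpace ℝ V, T z = A.mulVec z := fun z => rfl
  -- Rayleigh quotient identity
  have hray : ∀ z : EuclideanSpace ℝ V,
      RCLike.re (inner ℝ (T z) z) / ‖z‖ ^ 2
        = (∑ i, (z : V → ℝ) i * A.mulVec (z : V → ℝ) i) / (∑ i, (z : V → ℝ) i ^ 2) := by
    intro z
    have h1 : RCLike.re (inner ℝ (T z) z) = ∑ i, (z : V → ℝ) i * A.mulVec (z : V → ℝ) i := by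
      simp only [PiLp.inner_apply, RCLike.inner_apply, hTapp]
      simp [mul_comm, starRingEnd_apply]
    have h2 : ‖z‖ ^ 2 = ∑ i, (z : V → ℝ) i ^ 2 := by
      rw [EuclideanSpace.norm_eq, Real.sq_sqrt (by positivity)]
      simp [sq_abs]
    rw [h1, h2]
  -- the iSup Rayleigh quotient
  set lam : ℝ := ⨆ z : { z : EuclideanSpace ℝ V // z ≠ 0 },
      RCLike.re (inner ℝ (T z) z) / ‖(z : EuclideanSpace ℝ V)‖ ^ 2 with hlam
  have hEig : Module.End.HasEigenvalue T lam :=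
    hTsymm.hasEigenvalue_iSup_of_finiteDimensional
  obtain ⟨v, hv⟩ := hEig.exists_hasEigenvector
  have hveq : A.mulVec v = lam • v := by rw [← hTapp]; exact congrArg WithLp.ofLp hv.apply_eq_smul
  have hvne : (v : V → ℝ) ≠ 0 := (WithLp.ofLp_eq_zero 2).ne.2 hv.right
  have hlamroot : A.charpoly.IsRoot lam := (isRoot_iff_eigen A lam).mpr ⟨v, hvne, hveq⟩
  have hrootsne : A.charpoly.roots ≠ 0 := by
    intro hzero
    have : lam ∈ A.charpoly.roots :=
      (Polynomial.mem_roots (A.charpoly_monic.ne_zero)).mpr hlamroot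
    rw [hzero] at this
    simp at this
  obtain ⟨hmem, hmax⟩ := eig_one_spec A hrootsne
  -- eig A 1 ≤ μ
  have heig_root : A.charpoly.IsRoot (eig A 1) :=
    Polynomial.isRoot_of_mem_roots hmem
  obtain ⟨w, hwne, hweq⟩ := (isRoot_iff_eigen A (eig A 1)).mp heig_root
  have hwsum : ∑ i, w i * A.mulVec w i = eig A 1 * ∑ i, w i ^ 2 := by
    rw [hweq, Finset.mul_sum]
    exact Finset.sum_congr rfl fun i _ => by simp [Pi.smul_apply]; ring
  have heig_le : eig A 1 ≤ μ := by
    have h1 := quad_le_mu A hsym hnn x hx μ hAx w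
    rw [hwsum] at h1
    exact le_of_mul_le_mul_right (by linarith) (sum_sq_pos hwne)
  refine ⟨fun y hy => ?_, heig_le⟩
  -- lower bound: Rayleigh(y) ≤ lam ≤ eig A 1
  have hlam_le : lam ≤ eig A 1 := by
    apply hmax
    exact (Polynomial.mem_roots (A.charpoly_monic.ne_zero)).mpr hlamroot
  -- bddAbove
  have hbdd : BddAbove (Set.range fun z : { z : EuclideanSpace ℝ V // z ≠ 0 } =>
      RCLike.re (inner ℝ (T z) z) / ‖(z : EuclideanSpace ℝ V)‖ ^ 2) := by
    refine ⟨μ, ?_⟩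
    rintro r ⟨z, rfl⟩
    dsimp only
    rw [hray]
    have hz : (z : EuclideanSpace ℝ V) ≠ 0 := z.prop
    have hzfun : ((z : EuclideanSpace ℝ V) : V → ℝ) ≠ 0 := (WithLp.ofLp_eq_zero 2).ne.2 hz
    rw [div_le_iff₀ (sum_sq_pos hzfun)]
    exact quad_le_mu A hsym hnn x hx μ hAx _
  have hyE : ((WithLp.equiv 2 (V → ℝ)).symm y : EuclideanSpace ℝ V) ≠ 0 := by
    simpa using hy
  have := le_ciSup hbdd (⟨(WithLp.equiv 2 (V → ℝ)).symm y, hyE⟩ :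
      { z : EuclideanSpace ℝ V // z ≠ 0 })
  rw [hray] at this
  calc (∑ i, y i * A.mulVec y i) / (∑ i, y i ^ 2) ≤ lam := this
    _ ≤ eig A 1 := hlam_le


namespace SpiderAux

noncomputable def t : ℝ := (Real.sqrt 2)⁻¹

lemma ht : 0 < t := by
  rw [t]; positivity

lemma ht2 : t ^ 2 = 1 / 2 := by
  rw [t, inv_pow, Real.sq_sqrt (by norm_num : (2:ℝ) ≥ 0)]
  norm_num

lemma ht1 : t < 1 := by
  rw [t]
  rw [inv_lt_one_iff₀]
  right
  nlinarith [Real.sq_sqrt (by norm_num : (2:ℝ) ≥ 0), Real.sqrt_nonneg 2]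

noncomputable def xv (ℓ : ℕ) : Option (Fin 3 × Fin ℓ) → ℝ
  | none => 1
  | some (_, j) => t ^ ((j : ℕ) + 1)

lemma xv_pos (ℓ : ℕ) (u) : 0 < xv ℓ u := by
  cases u with
  | none => norm_num [xv]
  | some p => exact pow_pos ht _

lemma adj_none_some (ℓ : ℕ) (i : Fin 3) (j : Fin ℓ) :
    (spider ℓ).Adj none (some (i, j)) ↔ (j : ℕ) = 0 := by
  simp [spider, SimpleGraph.fromRel_adj]

lemma adj_none_none (ℓ : ℕ) : ¬ (spider ℓ).Adj none none :=
  (spider ℓ).loopless.irrefl none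

lemma adj_some_some (ℓ : ℕ) (i i' : Fin 3) (j j' : Fin ℓ) :
    (spider ℓ).Adj (some (i, j)) (some (i', j')) ↔
      (i = i' ∧ ((j' : ℕ) = (j : ℕ) + 1 ∨ (j : ℕ) = (j' : ℕ) + 1)) := by
  simp only [spider, SimpleGraph.fromRel_adj, ne_eq, Option.some.injEq, Prod.mk.injEq]
  constructor
  · rintro ⟨hne, h | h⟩
    · exact ⟨h.1, Or.inl h.2⟩
    · exact ⟨h.1.symm, Or.inr h.2⟩
  · rintro ⟨hi, h | h⟩
    · exact ⟨by rintro ⟨rfl, rfl⟩; omega, Or.inl ⟨hi, h⟩⟩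
    · exact ⟨by rintro ⟨rfl, rfl⟩; omega, Or.inr ⟨hi.symm, h⟩⟩

lemma sum_fin_ite {ℓ : ℕ} (m : ℕ) (f : Fin ℓ → ℝ) :
    ∑ j : Fin ℓ, (if (j : ℕ) = m then f j else 0)
      = if h : m < ℓ then f ⟨m, h⟩ else 0 := by
  split_ifs with h
  · rw [Finset.sum_eq_single ⟨m, h⟩]
    · simp
    · intro j _ hj
      rw [if_neg]
      intro hc
      exact hj (Fin.ext hc)
    · intro hc
      exact absurd (Finset.mem_univ _) hc
  · apply Finset.sum_eq_zero
    intro j _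
    rw [if_neg]
    omega

end SpiderAux

namespace SpiderAux

lemma adj_some_none (ℓ : ℕ) (i : Fin 3) (j : Fin ℓ) :
    (spider ℓ).Adj (some (i, j)) none ↔ (j : ℕ) = 0 := by
  rw [SimpleGraph.adj_comm]; exact adj_none_some ℓ i j

lemma mulVec_apply {V : Type*} [Fintype V] [DecidableEq V] (G : SimpleGraph V)
    (x : V → ℝ) (u : V) :
    (adjMat G).mulVec x u = ∑ v, (if G.Adj u v then (1:ℝ) else 0) * x v := rfl

lemma mulVec_none (ℓ : ℕ) (hℓ : 1 ≤ ℓ) :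
    (adjMat (spider ℓ)).mulVec (xv ℓ) none = 3 * t := by
  rw [mulVec_apply, Fintype.sum_option, if_neg (adj_none_none ℓ), Fintype.sum_prod_type]
  have key : ∀ (i : Fin 3) (j : Fin ℓ),
      (if (spider ℓ).Adj none (some (i, j)) then (1:ℝ) else 0) * xv ℓ (some (i, j))
        = if (j : ℕ) = 0 then t ^ ((j:ℕ)+1) else 0 := by
    intro i j
    by_cases h : (j : ℕ) = 0 <;> simp [adj_none_some, h, xv]
  simp only [key, sum_fin_ite]
  rw [dif_pos (by omega : 0 < ℓ)]
  simp

lemma mulVec_some (ℓ : ℕ) (hℓ : 1 ≤ ℓ) (i : Fin 3) (j : Fin ℓ) :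
    (adjMat (spider ℓ)).mulVec (xv ℓ) (some (i, j))
      = 3 * t * t ^ ((j:ℕ)+1) - (if (j:ℕ) = ℓ - 1 then t ^ (ℓ+1) else 0) := by
  rw [mulVec_apply, Fintype.sum_option, Fintype.sum_prod_type]
  have hnone : (if (spider ℓ).Adj (some (i,j)) none then (1:ℝ) else 0) * xv ℓ none
      = if (j:ℕ) = 0 then 1 else 0 := by
    by_cases h : (j:ℕ) = 0 <;> simp [adj_some_none, h, xv]
  have hsome : ∀ (i' : Fin 3) (j' : Fin ℓ),
      (if (spider ℓ).Adj (some (i,j)) (some (i',j')) then (1:ℝ) else 0) * xv ℓ (some (i',j'))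
        = if i = i' then
            ((if (j':ℕ) = (j:ℕ)+1 then t ^ ((j':ℕ)+1) else 0)
              + (if (j:ℕ) = (j':ℕ)+1 then t ^ ((j':ℕ)+1) else 0)) else 0 := by
    intro i' j'
    by_cases hi : i = i'
    · rw [if_pos hi]
      by_cases h1 : (j':ℕ) = (j:ℕ)+1
      · have h2 : ¬ (j:ℕ) = (j':ℕ)+1 := by omega
        rw [if_pos ((adj_some_some ℓ i i' j j').mpr ⟨hi, Or.inl h1⟩), if_pos h1, if_neg h2]
        simp [xv]
      · by_cases h2 : (j:ℕ) = (j':ℕ)+1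
        · rw [if_pos ((adj_some_some ℓ i i' j j').mpr ⟨hi, Or.inr h2⟩), if_neg h1, if_pos h2]
          simp [xv]
        · rw [if_neg, if_neg h1, if_neg h2]
          · simp
          · rw [adj_some_some]
            rintro ⟨-, h | h⟩
            exacts [h1 h, h2 h]
    · rw [if_neg hi, if_neg]
      · simp
      · rw [adj_some_some]
        rintro ⟨h, -⟩
        exact hi h
  simp only [hnone, hsome]
  have houter : ∀ (G : Fin ℓ → ℝ),
      ∑ i' : Fin 3, ∑ j' : Fin ℓ, (if i = i' then G j' else 0) = ∑ j', G j' := by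
    intro G
    rw [Finset.sum_eq_single i]
    · simp
    · intro i' _ hne
      exact Finset.sum_eq_zero fun j' _ => if_neg (fun h => hne h.symm)
    · intro h
      exact absurd (Finset.mem_univ i) h
  rw [houter]
  rw [Finset.sum_add_distrib]
  have hjlt := j.isLt
  have hS2 : ∑ j' : Fin ℓ, (if (j:ℕ) = (j':ℕ)+1 then t ^ ((j':ℕ)+1) else 0)
      = if (j:ℕ) = 0 then 0 else t ^ (j:ℕ) := by
    by_cases hj0 : (j:ℕ) = 0
    · rw [if_pos hj0]
      exact Finset.sum_eq_zero fun j' _ => if_neg (by omega)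
    · rw [if_neg hj0]
      calc ∑ j' : Fin ℓ, (if (j:ℕ) = (j':ℕ)+1 then t ^ ((j':ℕ)+1) else 0)
          = ∑ j' : Fin ℓ, (if (j':ℕ) = (j:ℕ)-1 then t ^ ((j':ℕ)+1) else 0) :=
            Finset.sum_congr rfl fun j' _ => if_congr (by omega) rfl rfl
        _ = t ^ (j:ℕ) := by
            rw [sum_fin_ite]
            rw [dif_pos (by omega : (j:ℕ)-1 < ℓ)]
            have he : (j:ℕ)-1+1 = (j:ℕ) := by omega
            rw [he]
  rw [hS2, sum_fin_ite]
  by_cases hj0 : (j:ℕ) = 0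
  · rw [if_pos hj0, if_pos hj0]
    by_cases hlast : (j:ℕ) + 1 = ℓ
    · rw [dif_neg (by omega), if_pos (by omega)]
      have hl : ℓ + 1 = (j:ℕ) + 2 := by omega
      rw [hl, hj0]
      linear_combination (-2 : ℝ) * ht2
    · rw [dif_pos (by omega), if_neg (by omega)]
      simp only [Fin.val_mk]
      rw [hj0]
      linear_combination (-2 : ℝ) * ht2
  · rw [if_neg hj0, if_neg hj0]
    by_cases hlast : (j:ℕ) + 1 = ℓ
    · rw [dif_neg (by omega), if_pos (by omega)]
      have hl : ℓ + 1 = (j:ℕ) + 2 := by omega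
      rw [hl]
      linear_combination (-2 * t ^ (j:ℕ)) * ht2
    · rw [dif_pos (by omega), if_neg (by omega)]
      simp only [Fin.val_mk]
      linear_combination (-2 * t ^ (j:ℕ)) * ht2

end SpiderAux

namespace SpiderAux


lemma adj_symm {V : Type*} [Fintype V] [DecidableEq V] (G : SimpleGraph V) :
    (adjMat G).IsSymm := by
  ext i j
  show (if G.Adj j i then (1:ℝ) else 0) = (if G.Adj i j then (1:ℝ) else 0)
  exact if_congr (G.adj_comm j i) rfl rfl

lemma adj_nonneg {V : Type*} [Fintype V] [DecidableEq V] (G : SimpleGraph V) (i j : V) :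
    0 ≤ adjMat G i j := by
  show (0:ℝ) ≤ if G.Adj i j then 1 else 0
  split <;> norm_num

lemma hAx (ℓ : ℕ) (hℓ : 1 ≤ ℓ) (u) :
    (adjMat (spider ℓ)).mulVec (xv ℓ) u ≤ 3 * t * xv ℓ u := by
  cases u with
  | none =>
    rw [mulVec_none ℓ hℓ]
    simp [xv]
  | some p =>
    obtain ⟨i, j⟩ := p
    rw [mulVec_some ℓ hℓ i j]
    have : (0:ℝ) ≤ if (j:ℕ) = ℓ - 1 then t ^ (ℓ+1) else 0 := by
      split
      · exact le_of_lt (pow_pos ht _)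
      · exact le_refl 0
    show _ - _ ≤ _
    have hx : xv ℓ (some (i,j)) = t ^ ((j:ℕ)+1) := rfl
    rw [hx]
    linarith

lemma num_eq (ℓ : ℕ) (hℓ : 1 ≤ ℓ) :
    ∑ u, xv ℓ u * (adjMat (spider ℓ)).mulVec (xv ℓ) u
      = 3 * t * (∑ u, xv ℓ u ^ 2) - 3 * t ^ (2*ℓ+1) := by
  rw [Fintype.sum_option, Fintype.sum_option, Fintype.sum_prod_type, Fintype.sum_prod_type]
  rw [mulVec_none ℓ hℓ]
  have e : ∀ (i : Fin 3) (j : Fin ℓ),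
      xv ℓ (some (i,j)) * (adjMat (spider ℓ)).mulVec (xv ℓ) (some (i,j))
        = 3 * t * (xv ℓ (some (i,j)) ^ 2)
          - (if (j:ℕ) = ℓ - 1 then t ^ ((j:ℕ)+1) * t ^ (ℓ+1) else 0) := by
    intro i j
    rw [mulVec_some ℓ hℓ i j]
    have hx : xv ℓ (some (i,j)) = t ^ ((j:ℕ)+1) := rfl
    rw [hx]
    split <;> ring
  simp only [e]
  have esum : ∀ i : Fin 3,
      ∑ j : Fin ℓ, (3 * t * (xv ℓ (some (i,j)) ^ 2)
          - (if (j:ℕ) = ℓ - 1 then t ^ ((j:ℕ)+1) * t ^ (ℓ+1) else 0))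
        = (∑ j : Fin ℓ, 3 * t * (xv ℓ (some (i,j)) ^ 2)) - t ^ (2*ℓ+1) := by
    intro i
    rw [Finset.sum_sub_distrib]
    congr 1
    rw [sum_fin_ite (ℓ-1) (fun j : Fin ℓ => t ^ ((j:ℕ)+1) * t ^ (ℓ+1))]
    rw [dif_pos (by omega : ℓ - 1 < ℓ)]
    show t ^ (ℓ-1+1) * t ^ (ℓ+1) = t ^ (2*ℓ+1)
    rw [← pow_add]
    congr 1
    omega
  simp only [esum]
  have hx0 : xv ℓ none = 1 := rfl
  simp only [Fin.sum_univ_three, hx0]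
  ring_nf
  simp only [Finset.mul_sum, Finset.sum_mul]


lemma xv_ne (ℓ : ℕ) : xv ℓ ≠ 0 := by
  intro h
  have := congrFun h none
  simp [xv] at this

lemma bounds (ℓ : ℕ) (hℓ : 1 ≤ ℓ) :
    3*t - 3*t^(2*ℓ+1) ≤ graphEig (spider ℓ) 1 ∧ graphEig (spider ℓ) 1 ≤ 3*t := by
  obtain ⟨hlow, hup⟩ := key_bounds' (adjMat (spider ℓ)) (adj_symm _) (adj_nonneg _)
    (xv ℓ) (xv_pos ℓ) (3*t) (hAx ℓ hℓ)
  refine ⟨?_, hup⟩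
  have h1 := hlow (xv ℓ) (xv_ne ℓ)
  rw [num_eq ℓ hℓ] at h1
  set S := ∑ u, xv ℓ u ^ 2 with hS
  have hS1 : 1 ≤ S := by
    have hs := Finset.single_le_sum (f := fun u => xv ℓ u ^ 2)
      (fun u _ => sq_nonneg _) (Finset.mem_univ (none : Option (Fin 3 × Fin ℓ)))
    have hx1 : xv ℓ none = 1 := rfl
    rw [hx1] at hs
    rw [hS]
    simpa using hs
  have hT : 0 ≤ 3*t^(2*ℓ+1) := by
    have := pow_pos ht (2*ℓ+1)
    linarith
  have h2 : 3*t - 3*t^(2*ℓ+1) ≤ (3*t*S - 3*t^(2*ℓ+1))/S := by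
    rw [le_div_iff₀ (by linarith : (0:ℝ) < S)]
    nlinarith
  exact le_trans h2 h1


theorem spider_eig_tendsto_aux :
    Filter.Tendsto (fun ℓ : ℕ => graphEig (spider ℓ) 1) Filter.atTop
      (nhds (3 / Real.sqrt 2)) := by
  have h32 : 3 / Real.sqrt 2 = 3 * t := by rw [t, div_eq_mul_inv]
  rw [h32]
  have hpow : Filter.Tendsto (fun ℓ : ℕ => t^(2*ℓ+1)) Filter.atTop (nhds 0) := by
    have h0 : Filter.Tendsto (fun n : ℕ => t^n) Filter.atTop (nhds 0) :=
      tendsto_pow_atTop_nhds_zero_of_lt_one (le_of_lt ht) ht1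
    have h1 : Filter.Tendsto (fun ℓ : ℕ => 2*ℓ+1) Filter.atTop Filter.atTop :=
      Filter.tendsto_atTop_mono (fun n => by simp only [id_eq]; omega) Filter.tendsto_id
    exact h0.comp h1
  have hlow : Filter.Tendsto (fun ℓ : ℕ => 3*t - 3*t^(2*ℓ+1)) Filter.atTop (nhds (3*t)) := by
    have := (tendsto_const_nhds (x := 3*t) (f := Filter.atTop (α := ℕ))).sub
      (hpow.const_mul 3)
    simpa using this
  apply tendsto_of_tendsto_of_tendsto_of_le_of_le' hlow
    (tendsto_const_nhds (x := 3*t) (f := Filter.atTop (α := ℕ)))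
  · exact Filter.eventually_atTop.mpr ⟨1, fun ℓ hℓ => (bounds ℓ hℓ).1⟩
  · exact Filter.eventually_atTop.mpr ⟨1, fun ℓ hℓ => (bounds ℓ hℓ).2⟩

end SpiderAux
end Aux

/-- `λ₁(T(ℓ,ℓ,ℓ)) → 3/√2` as `ℓ → ∞`. -/
theorem spider_eig_tendsto :
    Filter.Tendsto (fun ℓ : ℕ => graphEig (spider ℓ) 1) Filter.atTop
      (nhds (3 / Real.sqrt 2)) :=
  SpiderAux.spider_eig_tendsto_aux
end

section
/- For all integers p,q ≥ 2 and ℓ ≥ 1, the theta graph P(p,q,ℓ) consisting of three internally disjoint paths of lengths p, q, ℓ joining the same pair of endpoints has largest adjacency eigenvalue at least 3/√2. -/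
open scoped Classical

/-- Theta graph `P(p,q,ℓ)`: two endpoints `Sum.inl 0`, `Sum.inl 1` joined by three internally
disjoint paths of lengths `p`, `q`, `ℓ` (in edges). -/
def thetaGraph (p q ℓ : ℕ) :
    SimpleGraph (Fin 2 ⊕ (Fin (p - 1) ⊕ Fin (q - 1) ⊕ Fin (ℓ - 1))) :=
  SimpleGraph.fromRel fun u v =>
    match u, v with
    | Sum.inl x, Sum.inl y => (x : ℕ) = 0 ∧ (y : ℕ) = 1 ∧ (p = 1 ∨ q = 1 ∨ ℓ = 1)
    | Sum.inl x, Sum.inr (Sum.inl i) =>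
        ((x : ℕ) = 0 ∧ (i : ℕ) = 0) ∨ ((x : ℕ) = 1 ∧ (i : ℕ) = p - 2)
    | Sum.inl x, Sum.inr (Sum.inr (Sum.inl i)) =>
        ((x : ℕ) = 0 ∧ (i : ℕ) = 0) ∨ ((x : ℕ) = 1 ∧ (i : ℕ) = q - 2)
    | Sum.inl x, Sum.inr (Sum.inr (Sum.inr i)) =>
        ((x : ℕ) = 0 ∧ (i : ℕ) = 0) ∨ ((x : ℕ) = 1 ∧ (i : ℕ) = ℓ - 2)
    | Sum.inr (Sum.inl i), Sum.inr (Sum.inl j) => (j : ℕ) = (i : ℕ) + 1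
    | Sum.inr (Sum.inr (Sum.inl i)), Sum.inr (Sum.inr (Sum.inl j)) => (j : ℕ) = (i : ℕ) + 1
    | Sum.inr (Sum.inr (Sum.inr i)), Sum.inr (Sum.inr (Sum.inr j)) => (j : ℕ) = (i : ℕ) + 1
    | _, _ => False


open Matrix Polynomial
theorem isRoot_charpoly_of_eigen {V : Type*} [Fintype V] [DecidableEq V] (A : Matrix V V ℝ)
    (μ : ℝ) (v : V → ℝ) (hv : v ≠ 0) (h : A.mulVec v = μ • v) : A.charpoly.IsRoot μ := by
  have hdet : ((Matrix.diagonal fun _ : V => μ) - A).det = 0 := by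
    rw [← Matrix.exists_mulVec_eq_zero_iff]
    exact ⟨v, hv, by simp [Matrix.sub_mulVec, h, Matrix.diagonal_mulVec_single]⟩
  have h2 : (charmatrix A).map (evalRingHom μ) = (Matrix.diagonal fun _ : V => μ) - A := by
    ext i j
    by_cases hij : i = j <;>
      simp [hij, charmatrix_apply_eq, charmatrix_apply_ne, Matrix.diagonal, Matrix.sub_apply]
  have h3 := congrArg Matrix.det h2
  rw [← RingHom.mapMatrix_apply, ← RingHom.map_det] at h3
  simpa [Matrix.charpoly, Polynomial.IsRoot, hdet] using h3



open Polynomial in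
theorem root_le_eig_one {V : Type*} [Fintype V] [DecidableEq V] (A : Matrix V V ℝ)
    (μ : ℝ) (h : A.charpoly.IsRoot μ) : μ ≤ eig A 1 := by
  have hne : A.charpoly ≠ 0 := A.charpoly_monic.ne_zero
  have hmem : μ ∈ eigList A := by
    rw [eigList, Multiset.mem_sort]
    exact (Polynomial.mem_roots hne).2 h
  have hsorted : (eigList A).Pairwise (· ≤ ·) := Multiset.pairwise_sort _ _
  obtain ⟨i, hi⟩ := List.get_of_mem hmem
  have hlen : 0 < (eigList A).length := List.length_pos_iff.2 (List.ne_nil_of_mem hmem)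
  have hlast : (eigList A).length - 1 < (eigList A).length := by omega
  rw [eig, List.getD_eq_getElem _ _ hlast]
  rw [show (eigList A)[(eigList A).length - 1] = (eigList A).get ⟨(eigList A).length - 1, hlast⟩ from rfl, ← hi]
  exact List.Pairwise.rel_get_of_le hsorted (by rw [Fin.le_def]; simp; omega)


lemma dot_sum_left {ι V : Type*} [Fintype ι] [Fintype V] (f : ι → V → ℝ) (g : V → ℝ) :
    (∑ i, f i) ⬝ᵥ g = ∑ i, f i ⬝ᵥ g := by
  simp only [dotProduct, Finset.sum_apply, Finset.sum_mul]
  exact Finset.sum_comm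

lemma dot_sum_right {ι V : Type*} [Fintype ι] [Fintype V] (f : ι → V → ℝ) (g : V → ℝ) :
    g ⬝ᵥ (∑ i, f i) = ∑ i, g ⬝ᵥ f i := by
  simp only [dotProduct, Finset.sum_apply, Finset.mul_sum]
  exact Finset.sum_comm

lemma mulVec_sum {ι V : Type*} [Fintype ι] [Fintype V] (A : Matrix V V ℝ) (f : ι → V → ℝ) :
    A *ᵥ (∑ i, f i) = ∑ i, A *ᵥ f i := by
  ext v
  simp [Matrix.mulVec, dot_sum_right, Finset.sum_apply]

lemma euc_sum_apply {ι V : Type*} (s : Finset ι) (f : ι → EuclideanSpace ℝ V) (v : V) :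
    (∑ i ∈ s, f i) v = ∑ i ∈ s, f i v := by
  induction s using Finset.cons_induction with
  | empty => rfl
  | cons a s ha ih => rw [Finset.sum_cons, Finset.sum_cons, ← ih]; rfl

theorem exists_eigenvalue_ge {V : Type*} [Fintype V] [DecidableEq V] {A : Matrix V V ℝ}
    (hA : A.IsHermitian) (x : V → ℝ) (hx : x ≠ 0) (lam : ℝ)
    (h : lam * (x ⬝ᵥ x) ≤ A.mulVec x ⬝ᵥ x) : ∃ i, lam ≤ hA.eigenvalues i := by
  by_contra hcon
  push_neg at hcon
  set B := hA.eigenvectorBasis with hB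
  set y : EuclideanSpace ℝ V := (WithLp.equiv 2 (V → ℝ)).symm x with hy
  set c : V → ℝ := fun i => B.repr y i with hc
  have horm : ∀ i j, ⇑(B i) ⬝ᵥ ⇑(B j) = if i = j then (1:ℝ) else 0 := by
    intro i j
    have := orthonormal_iff_ite.mp B.orthonormal i j
    simpa [PiLp.inner_apply, RCLike.inner_apply, dotProduct, mul_comm] using this
  have hshape : x = ∑ i, c i • ⇑(B i) := by
    have h1 := (B.sum_repr y).symm
    funext v
    have h2 := congrFun (congrArg (fun (z : EuclideanSpace ℝ V) => (z : V → ℝ)) h1) v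
    simpa [hy, hc, WithLp.equiv_symm_apply, PiLp.toLp_apply, euc_sum_apply, PiLp.smul_apply,
      smul_eq_mul] using h2
  have hcne : c ≠ 0 := by
    intro h0
    apply hx
    rw [hshape, h0]
    simp
  obtain ⟨i0, hi0⟩ := Function.ne_iff.mp hcne
  simp only [Pi.zero_apply] at hi0
  have hq1 : x ⬝ᵥ x = ∑ i, c i * c i := by
    rw [hshape]
    rw [show (∑ i, c i • ⇑(B i)) = ∑ i, (fun i => c i • ⇑(B i)) i from rfl, dot_sum_left]
    simp only [smul_dotProduct, dot_sum_right, dotProduct_smul, horm]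
    simp [smul_eq_mul, mul_ite]
  have hAx : A *ᵥ x = ∑ i, (hA.eigenvalues i * c i) • ⇑(B i) := by
    rw [hshape]
    rw [_root_.mulVec_sum]
    refine Finset.sum_congr rfl fun i _ => ?_
    rw [Matrix.mulVec_smul, hA.mulVec_eigenvectorBasis, smul_comm, smul_smul]
  have hq2 : A.mulVec x ⬝ᵥ x = ∑ i, hA.eigenvalues i * (c i * c i) := by
    rw [hAx, hshape]
    rw [show (∑ i, (hA.eigenvalues i * c i) • ⇑(B i)) = ∑ i, (fun i => (hA.eigenvalues i * c i) • ⇑(B i)) i from rfl, dot_sum_left]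
    simp only [smul_dotProduct, dot_sum_right, dotProduct_smul, horm]
    simp only [smul_eq_mul, mul_ite, mul_one, mul_zero, Finset.sum_ite_eq, Finset.mem_univ,
      if_true]
    ring_nf
  have hlt : ∑ i, hA.eigenvalues i * (c i * c i) < lam * (x ⬝ᵥ x) := by
    rw [hq1, Finset.mul_sum]
    apply Finset.sum_lt_sum
    · intro i _
      nlinarith [mul_self_nonneg (c i), (hcon i).le]
    · exact ⟨i0, Finset.mem_univ _,
        mul_lt_mul_of_pos_right (hcon i0) (mul_self_pos.mpr hi0)⟩
  rw [hq2] at h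
  linarith




/-- t = 1/√2 -/
noncomputable def tt0 : ℝ := (Real.sqrt 2)⁻¹

lemma tt0_pos : 0 < tt0 := by
  rw [tt0]; positivity

lemma tt0_sq : tt0 * tt0 = 1 / 2 := by
  rw [tt0, ← mul_inv]
  rw [Real.mul_self_sqrt (by norm_num)]
  norm_num

lemma tt0_le_one : tt0 ≤ 1 := by
  rw [tt0]
  rw [inv_le_one_iff₀]
  right
  nlinarith [Real.sq_sqrt (by norm_num : (2:ℝ) ≥ 0), Real.sqrt_nonneg 2]

/-- value t^min(d, m-d) -/
noncomputable def tval (m d : ℕ) : ℝ := tt0 ^ min d (m - d)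

lemma tval_nonneg (m d : ℕ) : 0 ≤ tval m d := pow_nonneg tt0_pos.le _

lemma tval_zero (m : ℕ) : tval m 0 = 1 := by simp [tval]

lemma tval_full (m : ℕ) : tval m m = 1 := by simp [tval, Nat.sub_self]

lemma tval_one {m : ℕ} (hm : 2 ≤ m) : tval m 1 = tt0 := by
  rw [tval, show min 1 (m-1) = 1 by omega, pow_one]

lemma tval_last {m : ℕ} (hm : 2 ≤ m) : tval m (m-1) = tt0 := by
  rw [tval, show min (m-1) (m-(m-1)) = 1 by omega, pow_one]

lemma tt0_mono {a b : ℕ} (h : a ≤ b) : tt0 ^ b ≤ tt0 ^ a :=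
  pow_le_pow_of_le_one tt0_pos.le tt0_le_one h

lemma key3 {e : ℕ} (he : 1 ≤ e) : 3 * tt0 * tt0 ^ e = tt0 ^ (e-1) + tt0 ^ (e+1) := by
  obtain ⟨e', rfl⟩ : ∃ e', e = e' + 1 := ⟨e - 1, by omega⟩
  simp only [Nat.add_sub_cancel]
  have h2 := tt0_sq
  ring_nf
  nlinarith [pow_nonneg tt0_pos.le e', sq_nonneg tt0]

lemma L_int {m d : ℕ} (hm : 2 ≤ m) (h1 : 1 ≤ d) (h2 : d ≤ m - 1) :
    3 * tt0 * tval m d ≤ tval m (d-1) + tval m (d+1) := by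
  set e := min d (m - d) with he
  have he1 : 1 ≤ e := by omega
  rw [tval, ← he, key3 he1]
  rw [tval, tval]
  rcases le_total d (m - d) with hc | hc
  · have ha : min (d-1) (m-(d-1)) = e - 1 := by omega
    have hb : min (d+1) (m-(d+1)) ≤ e + 1 := by omega
    rw [ha]
    exact add_le_add le_rfl (tt0_mono hb)
  · have ha : min (d+1) (m-(d+1)) = e - 1 := by omega
    have hb : min (d-1) (m-(d-1)) ≤ e + 1 := by omega
    rw [ha]
    rw [add_comm (tt0 ^ (e-1))]
    exact add_le_add (tt0_mono hb) le_rfl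


lemma sum_ite_or {m : ℕ} (k1 k2 : ℕ) (hk : k2 ≠ k1 + 1) (f : ℕ → ℝ) :
    (∑ j : Fin m, if (j:ℕ) = k1 ∨ k2 = (j:ℕ) + 1 then f (j:ℕ) else 0)
      = (∑ j : Fin m, if (j:ℕ) = k1 then f (j:ℕ) else 0)
        + (∑ j : Fin m, if k2 = (j:ℕ) + 1 then f (j:ℕ) else 0) := by
  rw [← Finset.sum_add_distrib]
  refine Finset.sum_congr rfl fun j _ => ?_
  by_cases h1 : (j:ℕ) = k1 <;> by_cases h2 : k2 = (j:ℕ) + 1 <;> simp [h1, h2] <;> omega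

lemma H1 {m : ℕ} (k : ℕ) (f : ℕ → ℝ) :
    (∑ j : Fin m, if (j:ℕ) = k then f (j:ℕ) else 0) = if k < m then f k else 0 := by
  by_cases h : k < m
  · rw [if_pos h, Finset.sum_eq_single (⟨k, h⟩ : Fin m)]
    · simp
    · intro b _ hb
      rw [if_neg]
      intro hc
      exact hb (Fin.ext hc)
    · simp
  · rw [if_neg h]
    apply Finset.sum_eq_zero
    intro j _
    rw [if_neg]
    have := j.isLt
    omega

lemma H2 {m : ℕ} (k : ℕ) (f : ℕ → ℝ) :
    (∑ j : Fin m, if k = (j:ℕ) + 1 then f (j:ℕ) else 0)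
      = if 1 ≤ k ∧ k - 1 < m then f (k-1) else 0 := by
  have : ∀ j : Fin m, (if k = (j:ℕ) + 1 then f (j:ℕ) else 0)
      = if 1 ≤ k then (if (j:ℕ) = k - 1 then f (j:ℕ) else 0) else 0 := by
    intro j
    by_cases hk : 1 ≤ k
    · rw [if_pos hk]
      exact if_congr (by omega) rfl rfl
    · rw [if_neg hk, if_neg (by omega)]
  rw [Finset.sum_congr rfl fun j _ => this j]
  by_cases hk : 1 ≤ k
  · simp only [if_pos hk, H1]
    exact (if_congr (by tauto) rfl rfl).symm
  · simp [hk]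




section Adj
variable {p q ℓ : ℕ}
local notation "G" => thetaGraph p q ℓ

lemma A00 (a : Fin 2) : ¬ (G).Adj (Sum.inl a) (Sum.inl a) := SimpleGraph.irrefl _

lemma A01 (hp : 2 ≤ p) (hq : 2 ≤ q) : (G).Adj (Sum.inl 0) (Sum.inl 1) ↔ ℓ = 1 := by
  simp [thetaGraph, SimpleGraph.fromRel_adj]; omega

lemma A10 (hp : 2 ≤ p) (hq : 2 ≤ q) : (G).Adj (Sum.inl 1) (Sum.inl 0) ↔ ℓ = 1 := by
  rw [SimpleGraph.adj_comm]; exact A01 hp hq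

lemma A0p (j : Fin (p-1)) : (G).Adj (Sum.inl 0) (Sum.inr (Sum.inl j)) ↔ (j:ℕ) = 0 := by
  simp [thetaGraph, SimpleGraph.fromRel_adj]

lemma A1p (j : Fin (p-1)) : (G).Adj (Sum.inl 1) (Sum.inr (Sum.inl j)) ↔ (j:ℕ) = p - 2 := by
  simp [thetaGraph, SimpleGraph.fromRel_adj]

lemma A0q (j : Fin (q-1)) : (G).Adj (Sum.inl 0) (Sum.inr (Sum.inr (Sum.inl j))) ↔ (j:ℕ) = 0 := by
  simp [thetaGraph, SimpleGraph.fromRel_adj]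

lemma A1q (j : Fin (q-1)) : (G).Adj (Sum.inl 1) (Sum.inr (Sum.inr (Sum.inl j))) ↔ (j:ℕ) = q - 2 := by
  simp [thetaGraph, SimpleGraph.fromRel_adj]

lemma A0l (j : Fin (ℓ-1)) : (G).Adj (Sum.inl 0) (Sum.inr (Sum.inr (Sum.inr j))) ↔ (j:ℕ) = 0 := by
  simp [thetaGraph, SimpleGraph.fromRel_adj]

lemma A1l (j : Fin (ℓ-1)) : (G).Adj (Sum.inl 1) (Sum.inr (Sum.inr (Sum.inr j))) ↔ (j:ℕ) = ℓ - 2 := by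
  simp [thetaGraph, SimpleGraph.fromRel_adj]

lemma Ap0 (i : Fin (p-1)) : (G).Adj (Sum.inr (Sum.inl i)) (Sum.inl 0) ↔ (i:ℕ) = 0 := by
  rw [SimpleGraph.adj_comm]; exact A0p i
lemma Ap1 (i : Fin (p-1)) : (G).Adj (Sum.inr (Sum.inl i)) (Sum.inl 1) ↔ (i:ℕ) = p - 2 := by
  rw [SimpleGraph.adj_comm]; exact A1p i
lemma Aq0 (i : Fin (q-1)) : (G).Adj (Sum.inr (Sum.inr (Sum.inl i))) (Sum.inl 0) ↔ (i:ℕ) = 0 := by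
  rw [SimpleGraph.adj_comm]; exact A0q i
lemma Aq1 (i : Fin (q-1)) : (G).Adj (Sum.inr (Sum.inr (Sum.inl i))) (Sum.inl 1) ↔ (i:ℕ) = q - 2 := by
  rw [SimpleGraph.adj_comm]; exact A1q i
lemma Al0 (i : Fin (ℓ-1)) : (G).Adj (Sum.inr (Sum.inr (Sum.inr i))) (Sum.inl 0) ↔ (i:ℕ) = 0 := by
  rw [SimpleGraph.adj_comm]; exact A0l i
lemma Al1 (i : Fin (ℓ-1)) : (G).Adj (Sum.inr (Sum.inr (Sum.inr i))) (Sum.inl 1) ↔ (i:ℕ) = ℓ - 2 := by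
  rw [SimpleGraph.adj_comm]; exact A1l i

lemma App (i j : Fin (p-1)) : (G).Adj (Sum.inr (Sum.inl i)) (Sum.inr (Sum.inl j)) ↔
    ((j:ℕ) = (i:ℕ) + 1 ∨ (i:ℕ) = (j:ℕ) + 1) := by
  simp [thetaGraph, SimpleGraph.fromRel_adj]; rintro h rfl; omega
lemma Aqq (i j : Fin (q-1)) :
    (G).Adj (Sum.inr (Sum.inr (Sum.inl i))) (Sum.inr (Sum.inr (Sum.inl j))) ↔
    ((j:ℕ) = (i:ℕ) + 1 ∨ (i:ℕ) = (j:ℕ) + 1) := by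
  simp [thetaGraph, SimpleGraph.fromRel_adj]; rintro h rfl; omega
lemma All (i j : Fin (ℓ-1)) :
    (G).Adj (Sum.inr (Sum.inr (Sum.inr i))) (Sum.inr (Sum.inr (Sum.inr j))) ↔
    ((j:ℕ) = (i:ℕ) + 1 ∨ (i:ℕ) = (j:ℕ) + 1) := by
  simp [thetaGraph, SimpleGraph.fromRel_adj]; rintro h rfl; omega

lemma Apq (i : Fin (p-1)) (j : Fin (q-1)) :
    ¬ (G).Adj (Sum.inr (Sum.inl i)) (Sum.inr (Sum.inr (Sum.inl j))) := by
  simp [thetaGraph, SimpleGraph.fromRel_adj]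
lemma Apl (i : Fin (p-1)) (j : Fin (ℓ-1)) :
    ¬ (G).Adj (Sum.inr (Sum.inl i)) (Sum.inr (Sum.inr (Sum.inr j))) := by
  simp [thetaGraph, SimpleGraph.fromRel_adj]
lemma Aqp (i : Fin (q-1)) (j : Fin (p-1)) :
    ¬ (G).Adj (Sum.inr (Sum.inr (Sum.inl i))) (Sum.inr (Sum.inl j)) := by
  simp [thetaGraph, SimpleGraph.fromRel_adj]
lemma Aql (i : Fin (q-1)) (j : Fin (ℓ-1)) :
    ¬ (G).Adj (Sum.inr (Sum.inr (Sum.inl i))) (Sum.inr (Sum.inr (Sum.inr j))) := by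
  simp [thetaGraph, SimpleGraph.fromRel_adj]
lemma Alp (i : Fin (ℓ-1)) (j : Fin (p-1)) :
    ¬ (G).Adj (Sum.inr (Sum.inr (Sum.inr i))) (Sum.inr (Sum.inl j)) := by
  simp [thetaGraph, SimpleGraph.fromRel_adj]
lemma Alq (i : Fin (ℓ-1)) (j : Fin (q-1)) :
    ¬ (G).Adj (Sum.inr (Sum.inr (Sum.inr i))) (Sum.inr (Sum.inr (Sum.inl j))) := by
  simp [thetaGraph, SimpleGraph.fromRel_adj]
end Adj

noncomputable def thetaVec (p q ℓ : ℕ) :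
    (Fin 2 ⊕ (Fin (p-1) ⊕ Fin (q-1) ⊕ Fin (ℓ-1))) → ℝ
  | Sum.inl _ => 1
  | Sum.inr (Sum.inl i) => tval p ((i:ℕ)+1)
  | Sum.inr (Sum.inr (Sum.inl i)) => tval q ((i:ℕ)+1)
  | Sum.inr (Sum.inr (Sum.inr i)) => tval ℓ ((i:ℕ)+1)

lemma mulVec_adj {V : Type*} [Fintype V] [DecidableEq V] (G : SimpleGraph V) (X : V → ℝ) (v : V) :
    (adjMat G).mulVec X v = ∑ u, if G.Adj v u then X u else 0 := by
  simp [adjMat, Matrix.mulVec, dotProduct, ite_mul]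

theorem theta_pointwise (p q ℓ : ℕ) (hp : 2 ≤ p) (hq : 2 ≤ q) (hl : 1 ≤ ℓ)
    (v : Fin 2 ⊕ (Fin (p-1) ⊕ Fin (q-1) ⊕ Fin (ℓ-1))) :
    3 * tt0 * thetaVec p q ℓ v ≤ (adjMat (thetaGraph p q ℓ)).mulVec (thetaVec p q ℓ) v := by
  rw [mulVec_adj]
  rw [Fintype.sum_sum_type, Fintype.sum_sum_type, Fintype.sum_sum_type]
  obtain (a | (i | i | i)) := v
  · fin_cases a
    · rw [Fin.sum_univ_two]
      simp only [Fin.zero_eta, Fin.mk_one, thetaVec, A00, A01 hp hq, A0p, A0q, A0l,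
        if_false, Finset.sum_const_zero]
      rw [H1 0 (fun n => tval p (n+1)), H1 0 (fun n => tval q (n+1)),
        H1 0 (fun n => tval ℓ (n+1))]
      rw [if_pos (by omega : 0 < p - 1), if_pos (by omega : 0 < q - 1)]
      rw [show (0:ℕ) + 1 = 1 from rfl, tval_one hp, tval_one hq]
      by_cases hl1 : ℓ = 1
      · rw [if_pos hl1, if_neg (by omega)]
        nlinarith [tt0_le_one, tt0_pos]
      · rw [if_neg hl1, if_pos (by omega : 0 < ℓ - 1), tval_one (by omega)]
        nlinarith [tt0_pos]
    · rw [Fin.sum_univ_two]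
      simp only [Fin.zero_eta, Fin.mk_one, thetaVec, A00, A10 hp hq, A1p, A1q, A1l,
        if_false, Finset.sum_const_zero]
      rw [H1 (p-2) (fun n => tval p (n+1)), H1 (q-2) (fun n => tval q (n+1)),
        H1 (ℓ-2) (fun n => tval ℓ (n+1))]
      rw [if_pos (by omega : p - 2 < p - 1), if_pos (by omega : q - 2 < q - 1)]
      rw [show p - 2 + 1 = p - 1 by omega, tval_last hp,
        show q - 2 + 1 = q - 1 by omega, tval_last hq]
      by_cases hl1 : ℓ = 1
      · rw [if_pos hl1, if_neg (by omega)]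
        nlinarith [tt0_le_one, tt0_pos]
      · rw [if_neg hl1, if_pos (by omega : ℓ - 2 < ℓ - 1),
          show ℓ - 2 + 1 = ℓ - 1 by omega, tval_last (by omega)]
        nlinarith [tt0_pos]
  · have hi : (i:ℕ) < p - 1 := i.isLt
    rw [Fin.sum_univ_two]
    simp only [thetaVec, App, Ap0, Ap1, Apq, Apl, if_false, Finset.sum_const_zero]
    rw [sum_ite_or ((i:ℕ)+1) (i:ℕ) (by omega) (fun n => tval p (n+1))]
    rw [H1 ((i:ℕ)+1) (fun n => tval p (n+1)), H2 (i:ℕ) (fun n => tval p (n+1))]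
    have E1 : ((if (i:ℕ) = 0 then (1:ℝ) else 0)
        + if 1 ≤ (i:ℕ) ∧ (i:ℕ) - 1 < p - 1 then tval p ((i:ℕ) - 1 + 1) else 0) = tval p (i:ℕ) := by
      by_cases h0 : (i:ℕ) = 0
      · rw [if_pos h0, if_neg (by omega), h0, tval_zero]; ring
      · rw [if_neg h0, if_pos ⟨by omega, by omega⟩, show (i:ℕ) - 1 + 1 = (i:ℕ) by omega]; ring
    have E2 : ((if (i:ℕ) = p - 2 then (1:ℝ) else 0)
        + if (i:ℕ) + 1 < p - 1 then tval p ((i:ℕ) + 1 + 1) else 0) = tval p ((i:ℕ) + 1 + 1) := by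
      by_cases h0 : (i:ℕ) = p - 2
      · rw [if_pos h0, if_neg (by omega), show (i:ℕ) + 1 + 1 = p by omega, tval_full]; ring
      · rw [if_neg h0, if_pos (by omega)]; ring
    have L := L_int (m := p) (d := (i:ℕ)+1) hp (by omega) (by omega)
    rw [show (i:ℕ) + 1 - 1 = (i:ℕ) by omega] at L
    linarith [E1, E2, L]
  · have hi : (i:ℕ) < q - 1 := i.isLt
    rw [Fin.sum_univ_two]
    simp only [thetaVec, Aqq, Aq0, Aq1, Aqp, Aql, if_false, Finset.sum_const_zero]
    rw [sum_ite_or ((i:ℕ)+1) (i:ℕ) (by omega) (fun n => tval q (n+1))]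
    rw [H1 ((i:ℕ)+1) (fun n => tval q (n+1)), H2 (i:ℕ) (fun n => tval q (n+1))]
    have E1 : ((if (i:ℕ) = 0 then (1:ℝ) else 0)
        + if 1 ≤ (i:ℕ) ∧ (i:ℕ) - 1 < q - 1 then tval q ((i:ℕ) - 1 + 1) else 0) = tval q (i:ℕ) := by
      by_cases h0 : (i:ℕ) = 0
      · rw [if_pos h0, if_neg (by omega), h0, tval_zero]; ring
      · rw [if_neg h0, if_pos ⟨by omega, by omega⟩, show (i:ℕ) - 1 + 1 = (i:ℕ) by omega]; ring
    have E2 : ((if (i:ℕ) = q - 2 then (1:ℝ) else 0)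
        + if (i:ℕ) + 1 < q - 1 then tval q ((i:ℕ) + 1 + 1) else 0) = tval q ((i:ℕ) + 1 + 1) := by
      by_cases h0 : (i:ℕ) = q - 2
      · rw [if_pos h0, if_neg (by omega), show (i:ℕ) + 1 + 1 = q by omega, tval_full]; ring
      · rw [if_neg h0, if_pos (by omega)]; ring
    have L := L_int (m := q) (d := (i:ℕ)+1) hq (by omega) (by omega)
    rw [show (i:ℕ) + 1 - 1 = (i:ℕ) by omega] at L
    linarith [E1, E2, L]
  · have hi : (i:ℕ) < ℓ - 1 := i.isLt
    have hl2 : 2 ≤ ℓ := by omega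
    rw [Fin.sum_univ_two]
    simp only [thetaVec, All, Al0, Al1, Alp, Alq, if_false, Finset.sum_const_zero]
    rw [sum_ite_or ((i:ℕ)+1) (i:ℕ) (by omega) (fun n => tval ℓ (n+1))]
    rw [H1 ((i:ℕ)+1) (fun n => tval ℓ (n+1)), H2 (i:ℕ) (fun n => tval ℓ (n+1))]
    have E1 : ((if (i:ℕ) = 0 then (1:ℝ) else 0)
        + if 1 ≤ (i:ℕ) ∧ (i:ℕ) - 1 < ℓ - 1 then tval ℓ ((i:ℕ) - 1 + 1) else 0) = tval ℓ (i:ℕ) := by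
      by_cases h0 : (i:ℕ) = 0
      · rw [if_pos h0, if_neg (by omega), h0, tval_zero]; ring
      · rw [if_neg h0, if_pos ⟨by omega, by omega⟩, show (i:ℕ) - 1 + 1 = (i:ℕ) by omega]; ring
    have E2 : ((if (i:ℕ) = ℓ - 2 then (1:ℝ) else 0)
        + if (i:ℕ) + 1 < ℓ - 1 then tval ℓ ((i:ℕ) + 1 + 1) else 0) = tval ℓ ((i:ℕ) + 1 + 1) := by
      by_cases h0 : (i:ℕ) = ℓ - 2
      · rw [if_pos h0, if_neg (by omega), show (i:ℕ) + 1 + 1 = ℓ by omega, tval_full]; ring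
      · rw [if_neg h0, if_pos (by omega)]; ring
    have L := L_int (m := ℓ) (d := (i:ℕ)+1) hl2 (by omega) (by omega)
    rw [show (i:ℕ) + 1 - 1 = (i:ℕ) by omega] at L
    linarith [E1, E2, L]

lemma eigvec_dot_self {V : Type*} [Fintype V] [DecidableEq V] {A : Matrix V V ℝ}
    (hA : A.IsHermitian) (i : V) :
    ⇑(hA.eigenvectorBasis i) ⬝ᵥ ⇑(hA.eigenvectorBasis i) = 1 := by
  have := orthonormal_iff_ite.mp hA.eigenvectorBasis.orthonormal i i
  rw [PiLp.inner_apply] at this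
  simpa [RCLike.inner_apply, dotProduct, ← pow_two] using this

theorem rayleigh_le_eig_one {V : Type*} [Fintype V] [DecidableEq V] {A : Matrix V V ℝ}
    (hA : A.IsHermitian) (x : V → ℝ) (hx : x ≠ 0) (lam : ℝ)
    (h : lam * (x ⬝ᵥ x) ≤ A.mulVec x ⬝ᵥ x) : lam ≤ eig A 1 := by
  obtain ⟨i, hi⟩ := exists_eigenvalue_ge hA x hx lam h
  have hvne : ⇑(hA.eigenvectorBasis i) ≠ 0 := by
    intro h0
    have h1 := eigvec_dot_self hA i
    rw [h0] at h1
    simp [zero_dotProduct] at h1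
  have hroot := isRoot_charpoly_of_eigen A (hA.eigenvalues i) _ hvne
    (hA.mulVec_eigenvectorBasis i)
  exact le_trans hi (root_le_eig_one A _ hroot)



/-- For `p,q ≥ 2`, `ℓ ≥ 1`, the theta graph `P(p,q,ℓ)` satisfies
`λ₁(P(p,q,ℓ)) ≥ 3/√2`. -/
theorem theta_eig_ge (p q ℓ : ℕ) (hp : 2 ≤ p) (hq : 2 ≤ q) (hℓ : 1 ≤ ℓ) :
    3 / Real.sqrt 2 ≤ graphEig (thetaGraph p q ℓ) 1 := by
  have hA : (adjMat (thetaGraph p q ℓ)).IsHermitian := by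
    ext i j
    rw [Matrix.conjTranspose_apply]
    simp only [adjMat, Matrix.of_apply, star_trivial]
    exact if_congr (SimpleGraph.adj_comm _ _ _) rfl rfl
  have hx : thetaVec p q ℓ ≠ 0 := fun h => by
    simpa [thetaVec] using congrFun h (Sum.inl 0)
  have hdot : 3 * tt0 * (thetaVec p q ℓ ⬝ᵥ thetaVec p q ℓ)
      ≤ (adjMat (thetaGraph p q ℓ)).mulVec (thetaVec p q ℓ) ⬝ᵥ thetaVec p q ℓ := by
    rw [dotProduct, dotProduct, Finset.mul_sum]
    apply Finset.sum_le_sum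
    intro v _
    have h1 := theta_pointwise p q ℓ hp hq hℓ v
    have h2 : 0 ≤ thetaVec p q ℓ v := by
      obtain (a | (i | i | i)) := v
      · norm_num [thetaVec]
      all_goals exact tval_nonneg _ _
    calc 3 * tt0 * (thetaVec p q ℓ v * thetaVec p q ℓ v)
        = (3 * tt0 * thetaVec p q ℓ v) * thetaVec p q ℓ v := by ring
      _ ≤ _ := mul_le_mul_of_nonneg_right h1 h2
  have hfin := rayleigh_le_eig_one hA (thetaVec p q ℓ) hx (3 * tt0) hdot
  have hlam : 3 / Real.sqrt 2 = 3 * tt0 := by rw [tt0, div_eq_mul_inv]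
  rw [graphEig, hlam]
  exact hfin
end

section
/- Any connected finite simple graph whose largest adjacency eigenvalue is strictly less than 3/√2 has cyclomatic number at most 1 (i.e., it has at most one cycle). -/
open scoped Classical

namespace CycloAux

open Matrix Polynomial Finset

variable {V : Type*} [Fintype V] [DecidableEq V]


open Matrix Polynomial

variable {V : Type*} [Fintype V] [DecidableEq V]

lemma charpoly_eval (A : Matrix V V ℝ) (s : ℝ) :
    A.charpoly.eval s = (s • (1 : Matrix V V ℝ) - A).det := by
  rw [Matrix.charpoly, eval_det, Matrix.matPolyEquiv_charmatrix,
    Polynomial.eval_sub, Polynomial.eval_X, Polynomial.eval_C, Matrix.scalar_apply,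
    ← Matrix.smul_one_eq_diagonal]

lemma root_le_eig (A : Matrix V V ℝ) {r : ℝ} (hr : r ∈ A.charpoly.roots) : r ≤ eig A 1 := by
  have hmem : r ∈ eigList A := by
    rw [eigList, Multiset.mem_sort]; exact hr
  obtain ⟨i, hilt, hig⟩ := List.getElem_of_mem hmem
  have hlen : 0 < (eigList A).length := lt_of_le_of_lt (Nat.zero_le i) hilt
  have hle : (eigList A).length - 1 < (eigList A).length := Nat.sub_lt hlen one_pos
  have hs : (eigList A).Pairwise (· ≤ ·) := Multiset.pairwise_sort _ _
  rw [eig, List.getD_eq_getElem _ _ hle]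
  rw [← hig]
  have := hs.rel_get_of_le (a := ⟨i, hilt⟩) (b := ⟨(eigList A).length - 1, hle⟩)
    (by simp [Fin.mk_le_mk]; omega)
  simpa using this

lemma rayleigh_le_eig (A : Matrix V V ℝ) (hA : A.IsHermitian) (x : V → ℝ) (v₀ : V)
    (hx0 : x v₀ ≠ 0) (c : ℝ)
    (hc : c * (∑ v, x v * x v) ≤ ∑ v, x v * (A *ᵥ x) v) : c ≤ eig A 1 := by
  by_contra hlt
  push_neg at hlt
  set m := eig A 1 with hm
  set c' := (m + c) / 2 with hc'
  have hmc' : m < c' := by rw [hc']; linarith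
  have hc'c : c' < c := by rw [hc']; linarith
  have hAT : Aᵀ = A := by simpa using hA.eq
  have hB : (c' • (1 : Matrix V V ℝ) - A).IsHermitian := by
    simp [Matrix.IsHermitian, Matrix.conjTranspose_sub, Matrix.conjTranspose_smul, hA.eq, hAT]
  have key : ∀ j, 0 ≤ hB.eigenvalues j := by
    intro j
    have hspec := hB.eigenvalues_mem_spectrum_real j
    set z := hB.eigenvalues j with hz
    rw [spectrum.mem_iff] at hspec
    have hnu : ¬ IsUnit ((c' - z) • (1 : Matrix V V ℝ) - A) := by
      intro hu
      apply hspec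
      have heq : algebraMap ℝ (Matrix V V ℝ) z - (c' • 1 - A)
          = -((c' - z) • (1 : Matrix V V ℝ) - A) := by
        rw [Algebra.algebraMap_eq_smul_one, sub_smul]
        abel
      rw [heq]
      exact hu.neg
    have hdet : ((c' - z) • (1 : Matrix V V ℝ) - A).det = 0 := by
      by_contra hd
      exact hnu ((Matrix.isUnit_iff_isUnit_det _).mpr (isUnit_iff_ne_zero.mpr hd))
    have hroot : (c' - z) ∈ A.charpoly.roots := by
      rw [Polynomial.mem_roots (A.charpoly_monic.ne_zero)]
      rw [Polynomial.IsRoot, charpoly_eval]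
      exact hdet
    have := root_le_eig A hroot
    linarith
  have hPSD : (c' • (1 : Matrix V V ℝ) - A).PosSemidef :=
    hB.posSemidef_iff_eigenvalues_nonneg.mpr key
  have h2 := hPSD.dotProduct_mulVec_nonneg x
  have hsx : star x = x := by funext v; simp
  rw [hsx] at h2
  have hquad : dotProduct x ((c' • (1 : Matrix V V ℝ) - A) *ᵥ x)
      = c' * (∑ v, x v * x v) - ∑ v, x v * (A *ᵥ x) v := by
    rw [Matrix.sub_mulVec, dotProduct_sub, Matrix.smul_mulVec, Matrix.one_mulVec,
      dotProduct_smul]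
    rfl
  have hxx : 0 < ∑ v, x v * x v :=
    Finset.sum_pos' (fun i _ => mul_self_nonneg _)
      ⟨v₀, Finset.mem_univ _, mul_self_pos.mpr hx0⟩
  have := mul_lt_mul_of_pos_right hc'c hxx
  rw [hquad] at h2
  linarith


set_option linter.unusedSectionVars false


variable {V : Type*} [Fintype V] [DecidableEq V]

lemma core_exists (G : SimpleGraph V) :
    ∀ (n : ℕ) (K : Finset V), K.card ≤ n →
    2 * K.card + 2 ≤ ∑ v ∈ K, (K.filter (G.Adj v)).card →
    ∃ L : Finset V, (∀ v ∈ L, 2 ≤ (L.filter (G.Adj v)).card) ∧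
      ∃ v₀ ∈ L, 3 ≤ (L.filter (G.Adj v₀)).card := by
  intro n
  induction n with
  | zero =>
    intro K hcard h
    have : K = ∅ := Finset.card_eq_zero.mp (Nat.le_antisymm hcard (Nat.zero_le _))
    subst this
    simp at h
  | succ n ih =>
    intro K hcard h
    by_cases hall : ∀ v ∈ K, 2 ≤ (K.filter (G.Adj v)).card
    · refine ⟨K, hall, ?_⟩
      by_contra hno
      push_neg at hno
      have hb : ∑ v ∈ K, (K.filter (G.Adj v)).card ≤ ∑ _v ∈ K, 2 :=
        Finset.sum_le_sum (fun v hv => Nat.lt_succ_iff.mp (hno v hv))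
      rw [Finset.sum_const, smul_eq_mul] at hb
      omega
    · push_neg at hall
      obtain ⟨v, hvK, hvdeg⟩ := hall
      set K' := K.erase v with hK'
      have hcard' : K'.card = K.card - 1 := Finset.card_erase_of_mem hvK
      have hKpos : 1 ≤ K.card := Finset.card_pos.mpr ⟨v, hvK⟩
      -- pointwise bound for w ∈ K'
      have hpw : ∀ w ∈ K', (K.filter (G.Adj w)).card ≤
          (K'.filter (G.Adj w)).card + (if G.Adj w v then 1 else 0) := by
        intro w hw
        by_cases hadj : G.Adj w v
        · rw [if_pos hadj]
          have hsub : K.filter (G.Adj w) ⊆ insert v (K'.filter (G.Adj w)) := by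
            intro u hu
            rw [Finset.mem_filter] at hu
            rcases eq_or_ne u v with rfl | hne
            · exact Finset.mem_insert_self _ _
            · exact Finset.mem_insert_of_mem
                (Finset.mem_filter.mpr ⟨Finset.mem_erase.mpr ⟨hne, hu.1⟩, hu.2⟩)
          calc (K.filter (G.Adj w)).card ≤ (insert v (K'.filter (G.Adj w))).card :=
                Finset.card_le_card hsub
            _ ≤ (K'.filter (G.Adj w)).card + 1 := Finset.card_insert_le _ _
        · rw [if_neg hadj, add_zero]
          apply Finset.card_le_card
          intro u hu
          rw [Finset.mem_filter] at hu ⊢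
          refine ⟨Finset.mem_erase.mpr ⟨?_, hu.1⟩, hu.2⟩
          rintro rfl
          exact hadj hu.2
      have hsum1 : ∑ w ∈ K', (K.filter (G.Adj w)).card + (K.filter (G.Adj v)).card
          = ∑ w ∈ K, (K.filter (G.Adj w)).card := Finset.sum_erase_add _ _ hvK
      have hsum2 : ∑ w ∈ K', (K.filter (G.Adj w)).card ≤
          ∑ w ∈ K', (K'.filter (G.Adj w)).card + ∑ w ∈ K', (if G.Adj w v then 1 else 0) := by
        rw [← Finset.sum_add_distrib]
        exact Finset.sum_le_sum hpw
      have hsum3 : ∑ w ∈ K', (if G.Adj w v then 1 else 0) ≤ (K.filter (G.Adj v)).card := by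
        rw [← Finset.card_filter]
        apply Finset.card_le_card
        intro u hu
        rw [Finset.mem_filter] at hu ⊢
        exact ⟨Finset.mem_of_mem_erase hu.1, hu.2.symm⟩
      have hd1 : (K.filter (G.Adj v)).card ≤ 1 := Nat.lt_succ_iff.mp hvdeg
      have hnew : 2 * K'.card + 2 ≤ ∑ w ∈ K', (K'.filter (G.Adj w)).card := by omega
      exact ih K' (by omega) hnew



lemma dist_adj_le (G' : SimpleGraph V) {v₀ v w : V} (hr : G'.Reachable v₀ v)
    (ha : G'.Adj v w) : G'.dist v₀ w ≤ G'.dist v₀ v + 1 := by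
  obtain ⟨p, hp⟩ := hr.exists_walk_length_eq_dist
  calc G'.dist v₀ w ≤ (p.concat ha).length := SimpleGraph.dist_le _
    _ = p.length + 1 := SimpleGraph.Walk.length_concat _ _
    _ = G'.dist v₀ v + 1 := by rw [hp]

lemma exists_closer (G' : SimpleGraph V) {v₀ v : V} (hr : G'.Reachable v₀ v) (hne : v ≠ v₀) :
    ∃ w, G'.Adj w v ∧ G'.Reachable v₀ w ∧ G'.dist v₀ w + 1 = G'.dist v₀ v := by
  obtain ⟨p, hp⟩ := hr.exists_walk_length_eq_dist
  cases p with
  | nil => exact absurd rfl hne.symm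
  | @cons _ b _ h q =>
    obtain ⟨w, qq, h', heq⟩ := SimpleGraph.Walk.exists_cons_eq_concat h q
    have hlen : q.length + 1 = qq.length + 1 := by
      have := congrArg SimpleGraph.Walk.length heq
      simpa [SimpleGraph.Walk.length_concat] using this
    have hp' : qq.length + 1 = G'.dist v₀ v := by
      rw [← hlen, ← hp]; simp
    have h1 : G'.dist v₀ w ≤ qq.length := SimpleGraph.dist_le _
    have h2 : G'.dist v₀ v ≤ G'.dist v₀ w + 1 := dist_adj_le _ ⟨qq⟩ h'
    exact ⟨w, h', ⟨qq⟩, by omega⟩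

/-- The restriction of `G` to edges inside `K`. -/
def restrict (G : SimpleGraph V) (K : Finset V) : SimpleGraph V where
  Adj u v := G.Adj u v ∧ u ∈ K ∧ v ∈ K
  symm := ⟨by rintro u v ⟨h, hu, hv⟩; exact ⟨h.symm, hv, hu⟩⟩
  loopless := ⟨fun v h => G.loopless.irrefl v h.1⟩

lemma adjMat_isHermitian (G : SimpleGraph V) : (adjMat G).IsHermitian := by
  show (adjMat G)ᴴ = adjMat G
  ext i j
  simp [adjMat, Matrix.conjTranspose_apply, G.adj_comm]

lemma mulVec_ge (G : SimpleGraph V) (x : V → ℝ) (hx : ∀ v, 0 ≤ x v) (v : V) (T : Finset V)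
    (hT : ∀ w ∈ T, G.Adj v w) : ∑ w ∈ T, x w ≤ ((adjMat G) *ᵥ x) v := by
  have hrw : ((adjMat G) *ᵥ x) v = ∑ w, (if G.Adj v w then x w else 0) := by
    simp [adjMat, Matrix.mulVec, dotProduct, ite_mul]
  rw [hrw]
  calc ∑ w ∈ T, x w = ∑ w ∈ T, (if G.Adj v w then x w else 0) :=
        Finset.sum_congr rfl (fun w hw => by rw [if_pos (hT w hw)])
    _ ≤ ∑ w, (if G.Adj v w then x w else 0) := by
        apply Finset.sum_le_sum_of_subset_of_nonneg (Finset.subset_univ T)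
        intro w _ _
        split <;> [exact hx w; exact le_rfl]

lemma eig_ge_of_core (G : SimpleGraph V) (L : Finset V)
    (hmin : ∀ v ∈ L, 2 ≤ (L.filter (G.Adj v)).card)
    (v₀ : V) (hv₀ : v₀ ∈ L) (h3 : 3 ≤ (L.filter (G.Adj v₀)).card) :
    3 / Real.sqrt 2 ≤ eig (adjMat G) 1 := by
  set s := Real.sqrt 2 with hsdef
  have hs0 : 0 < s := Real.sqrt_pos.mpr (by norm_num)
  have hss : s * s = 2 := Real.mul_self_sqrt (by norm_num)
  set r := s⁻¹ with hrdef
  have hr0 : 0 < r := inv_pos.mpr hs0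
  have hr1 : r ≤ 1 := by
    rw [hrdef]
    rw [inv_le_one_iff₀]
    right
    nlinarith
  set G' := restrict G L with hG'
  set x : V → ℝ := fun v => if G'.Reachable v₀ v then r ^ (G'.dist v₀ v) else 0 with hx
  have hxnn : ∀ v, 0 ≤ x v := by
    intro v; rw [hx]; dsimp only; split
    · positivity
    · exact le_rfl
  have hxv₀ : x v₀ = 1 := by
    rw [hx]; dsimp only
    rw [if_pos (SimpleGraph.Reachable.refl v₀), SimpleGraph.dist_self, pow_zero]
  -- pointwise inequality
  have hpt : ∀ v, (3 / s) * (x v * x v) ≤ x v * ((adjMat G) *ᵥ x) v := by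
    intro v
    rcases eq_or_ne (x v) 0 with hxv | hxv
    · rw [hxv]; simp
    · have hreach : G'.Reachable v₀ v := by
        by_contra hre
        exact hxv (by rw [hx]; dsimp only; rw [if_neg hre])
      have hxval : x v = r ^ (G'.dist v₀ v) := by
        rw [hx]; dsimp only; rw [if_pos hreach]
      rcases eq_or_ne v v₀ with rfl | hne
      · -- center vertex
        set T := L.filter (G.Adj v) with hT
        have hTsub : ∀ w ∈ T, G.Adj v w := fun w hw => (Finset.mem_filter.mp hw).2
        have hTlow : ∀ w ∈ T, r ≤ x w := by
          intro w hw
          have hwL : w ∈ L := (Finset.mem_filter.mp hw).1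
          have hadj : G'.Adj v w := (⟨hTsub w hw, hv₀, hwL⟩ : (restrict G L).Adj v w)
          have hd : G'.dist v w ≤ 1 := by
            rw [SimpleGraph.dist_eq_one_iff_adj.mpr hadj]
          have : x w = r ^ (G'.dist v w) := by
            rw [hx]; dsimp only; rw [if_pos hadj.reachable]
          rw [this]
          calc r = r ^ 1 := (pow_one r).symm
            _ ≤ r ^ (G'.dist v w) := pow_le_pow_of_le_one hr0.le hr1 hd
        have hsum : (T.card : ℝ) * r ≤ ∑ w ∈ T, x w := by
          have := Finset.card_nsmul_le_sum T x r hTlow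
          simpa [nsmul_eq_mul] using this
        have h3r : 3 * r ≤ (T.card : ℝ) * r := by
          apply mul_le_mul_of_nonneg_right _ hr0.le
          exact_mod_cast h3
        have := (mulVec_ge G x hxnn v T hTsub)
        have hAx : 3 * r ≤ ((adjMat G) *ᵥ x) v := by linarith
        rw [hxv₀]
        have : 3 / s = 3 * r := by rw [hrdef, div_eq_mul_inv]
        rw [this]
        linarith
      · -- far vertex
        set d := G'.dist v₀ v with hd
        have hdpos : 0 < d := hreach.pos_dist_of_ne hne.symm
        obtain ⟨e, he⟩ : ∃ e, d = e + 1 := ⟨d - 1, by omega⟩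
        obtain ⟨w₁, hw₁adj, hw₁reach, hw₁d⟩ := exists_closer G' hreach hne
        have hvL : v ∈ L := (hw₁adj : (restrict G L).Adj w₁ v).2.2
        have hw₁x : x w₁ = r ^ e := by
          rw [hx]; dsimp only; rw [if_pos hw₁reach]
          congr 1
          omega
        obtain ⟨w₂, hw₂mem, hw₂ne⟩ :=
          Finset.exists_mem_ne (by have := hmin v hvL; omega : 1 < (L.filter (G.Adj v)).card) w₁
        have hw₂adj : G.Adj v w₂ := (Finset.mem_filter.mp hw₂mem).2
        have hw₂L : w₂ ∈ L := (Finset.mem_filter.mp hw₂mem).1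
        have hw₂adj' : G'.Adj v w₂ := (⟨hw₂adj, hvL, hw₂L⟩ : (restrict G L).Adj v w₂)
        have hw₂reach : G'.Reachable v₀ w₂ := hreach.trans hw₂adj'.reachable
        have hw₂d : G'.dist v₀ w₂ ≤ d + 1 := dist_adj_le G' hreach hw₂adj'
        have hw₂x : r ^ (e + 2) ≤ x w₂ := by
          rw [hx]; dsimp only; rw [if_pos hw₂reach]
          apply pow_le_pow_of_le_one hr0.le hr1
          omega
        set T : Finset V := {w₁, w₂} with hT
        have hTsub : ∀ w ∈ T, G.Adj v w := by
          intro w hw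
          rcases Finset.mem_insert.mp hw with rfl | hw
          · exact (hw₁adj : (restrict G L).Adj _ v).1.symm
          · rw [Finset.mem_singleton.mp hw]
            exact hw₂adj
        have hsum : ∑ w ∈ T, x w = x w₁ + x w₂ := Finset.sum_pair hw₂ne.symm
        have hAx := mulVec_ge G x hxnn v T hTsub
        have hAx2 : r ^ e + r ^ (e + 2) ≤ ((adjMat G) *ᵥ x) v := by
          rw [hsum] at hAx
          rw [hw₁x] at hAx
          linarith
        rw [hxval, he]
        have hrr : r * r = 1 / 2 := by
          rw [hrdef, ← mul_inv, hss]
          norm_num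
        have hxvnn : (0:ℝ) < r ^ (e+1) := by positivity
        have h3s : 3 / s = 3 * r := by rw [hrdef, div_eq_mul_inv]
        have key : (3 / s) * (r ^ (e+1) * r ^ (e+1)) = r ^ (e+1) * (r ^ e + r ^ (e+2)) := by
          rw [h3s]
          linear_combination (2 * r ^ e * r ^ e * r) * hrr
        rw [key]
        have := mul_le_mul_of_nonneg_left hAx2 (le_of_lt hxvnn)
        linarith
  -- assemble
  have hsum : (3 / s) * (∑ v, x v * x v) ≤ ∑ v, x v * ((adjMat G) *ᵥ x) v := by
    rw [Finset.mul_sum]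
    exact Finset.sum_le_sum (fun v _ => hpt v)
  exact rayleigh_le_eig (adjMat G) (adjMat_isHermitian G) x v₀ (by rw [hxv₀]; norm_num)
    (3 / s) hsum


end CycloAux

/-- A connected finite simple graph with `λ₁(G) < 3/√2` has cyclomatic
number `|E| - |V| + 1` at most `1`. -/
theorem cyclomatic_le_one_of_eig_lt {V : Type*} [Fintype V] [DecidableEq V]
    (G : SimpleGraph V) (hG : G.Connected) (h : graphEig G 1 < 3 / Real.sqrt 2) :
    cyclomatic G ≤ 1 := by
  by_contra hcy
  have hE : Fintype.card V + 1 ≤ edgeCount G := by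
    unfold cyclomatic at hcy; omega
  have hdeg : ∀ v, (Finset.univ.filter (G.Adj v)).card = G.degree v := by
    intro v
    have h : Finset.univ.filter (G.Adj v) = G.neighborFinset v := by
      ext w; simp [SimpleGraph.mem_neighborFinset]
    rw [h, SimpleGraph.degree]
  have hEF : edgeCount G = G.edgeFinset.card := by
    rw [edgeCount, Set.toFinite_toFinset, Set.toFinset_card]
    rw [SimpleGraph.edgeFinset, Set.toFinset_card]
  have hsum : ∑ v, G.degree v = 2 * edgeCount G := by
    rw [SimpleGraph.sum_degrees_eq_twice_card_edges, hEF]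
  obtain ⟨L, hmin, v₀, hv₀, h3⟩ := CycloAux.core_exists G (Fintype.card V) Finset.univ
    (by rw [Finset.card_univ]) (by
      simp_rw [hdeg, hsum, Finset.card_univ]
      omega)
  have hge := CycloAux.eig_ge_of_core G L hmin v₀ hv₀ h3
  have hlt : graphEig G 1 < 3 / Real.sqrt 2 := h
  unfold graphEig at hlt
  linarith
end
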